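/- Compatible function approximation for the intra-option path manifold. If η̃ ∈ ℝⁿ is a critical point of the squared error η ↦ ε(η) (i.e., the gradient of ε vanishes at η̃), then G_θ η̃ = g, where g ∈ ℝⁿ is the intra-option policy gradient vector g_i = ∑_{s,o} μ(s,o) ∑_a ∂_i π(o,s,θ,a) · q_U(s,o,a). In particular, if the matrix G_θ is invertible, then η̃ = G_θ^{-1} g; that is, the minimizer of the compatible-approximation error equals the natural gradient of the expected discounted return with respect to the intra-option policy parameters. -/

import Mathlib

/-- Partial derivative of `f : ℝⁿ → ℝ` with respect to the `i`-th coordinate of `θ`. -/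
noncomputable def pd {n : ℕ} (i : Fin n) (f : (Fin n → ℝ) → ℝ) (θ : Fin n → ℝ) : ℝ :=
  fderiv ℝ f θ (Pi.single i 1)

/-- Compatible function approximation for the intra-option path manifold.
If `η̃` is a critical point of the squared compatible-approximation error `ε`, then
`G_θ η̃ = g`, where `g` is the intra-option policy gradient vector
`g_i = ∑_{s,o} μ(s,o) ∑_a ∂_i π(o,s,θ,a) q_U(s,o,a)`; in particular if `G_θ` is invertible
then `η̃ = G_θ⁻¹ g`, the natural gradient. -/
theorem compatible_function_approximation_intra_option
    {S O A : Type*} [Fintype S] [Fintype O] [Fintype A]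
    [Nonempty S] [Nonempty O] [Nonempty A] {n : ℕ}
    (π : O → S → (Fin n → ℝ) → A → ℝ) (θ : Fin n → ℝ)
    (hπpos : ∀ o s θ' a, 0 < π o s θ' a)
    (hπsum : ∀ o s θ', ∑ a, π o s θ' a = 1)
    (hπdiff : ∀ o s a, ContDiff ℝ 1 (fun θ' => π o s θ' a))
    (μ : S × O → ℝ) (hμ : ∀ p, 0 ≤ μ p)
    (qU : S → O → A → ℝ)
    (qO : S → O → ℝ) (hqO : ∀ s o, qO s o = ∑ a, π o s θ a * qU s o a)
    (aU : S → O → A → ℝ) (haU : ∀ s o a, aU s o a = qU s o a - qO s o)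
    (f : (Fin n → ℝ) → S → O → A → ℝ)
    (hf : ∀ η s o a, f η s o a = ∑ i, η i * pd i (fun θ' => Real.log (π o s θ' a)) θ)
    (ε : (Fin n → ℝ) → ℝ)
    (hε : ∀ η, ε η = ∑ s, ∑ o, ∑ a,
        μ (s, o) * π o s θ a * (f η s o a - aU s o a) ^ 2)
    (G : Matrix (Fin n) (Fin n) ℝ)
    (hG : ∀ i j, G i j = ∑ s, ∑ o, ∑ a, μ (s, o) * π o s θ a
        * pd i (fun θ' => Real.log (π o s θ' a)) θ
        * pd j (fun θ' => Real.log (π o s θ' a)) θ)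
    (g : Fin n → ℝ)
    (hg : ∀ i, g i = ∑ s, ∑ o, μ (s, o) * ∑ a, pd i (fun θ' => π o s θ' a) θ * qU s o a)
    (ηt : Fin n → ℝ) (hcrit : fderiv ℝ ε ηt = 0) :
    G.mulVec ηt = g ∧ (IsUnit G → ηt = G⁻¹.mulVec g) := by
  classical
  -- notation
  set c : S → O → A → Fin n → ℝ :=
    fun s o a i => pd i (fun θ' => Real.log (π o s θ' a)) θ with hc
  have hdiff : ∀ o s a, DifferentiableAt ℝ (fun θ' => π o s θ' a) θ :=
    fun o s a => ((hπdiff o s a).differentiable one_ne_zero) θ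
  -- Lemma B : π * ∂ log π = ∂ π
  have hB : ∀ s o a j, π o s θ a * c s o a j = pd j (fun θ' => π o s θ' a) θ := by
    intro s o a j
    have hlog : HasFDerivAt (fun θ' => Real.log (π o s θ' a))
        ((π o s θ a)⁻¹ • fderiv ℝ (fun θ' => π o s θ' a) θ) θ :=
      (hdiff o s a).hasFDerivAt.log (ne_of_gt (hπpos o s θ a))
    have hfd := hlog.fderiv
    simp only [hc, pd, hfd, ContinuousLinearMap.smul_apply, smul_eq_mul]
    field_simp
    exact mul_div_cancel_left₀ _ (ne_of_gt (hπpos o s θ a))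
  -- Lemma C : ∑_a ∂ π = 0
  have hC : ∀ s o j, ∑ a, pd j (fun θ' => π o s θ' a) θ = 0 := by
    intro s o j
    have h1 : HasFDerivAt (fun θ' : Fin n → ℝ => ∑ a, π o s θ' a)
        (∑ a, fderiv ℝ (fun θ' => π o s θ' a) θ) θ := by
      exact HasFDerivAt.fun_sum (A := fun a (θ' : Fin n → ℝ) => π o s θ' a)
        (A' := fun a => fderiv ℝ (fun θ' => π o s θ' a) θ)
        (fun a _ => (hdiff o s a).hasFDerivAt)
    have h2 : HasFDerivAt (fun θ' : Fin n → ℝ => ∑ a, π o s θ' a) (0 : (Fin n → ℝ) →L[ℝ] ℝ) θ := by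
      have he : (fun θ' : Fin n → ℝ => ∑ a, π o s θ' a) = fun _ => (1:ℝ) :=
        funext fun θ' => hπsum o s θ'
      rw [he]; exact hasFDerivAt_const 1 θ
    have h3 := h1.unique h2
    have h4 := congrArg (fun (L : (Fin n → ℝ) →L[ℝ] ℝ) => L (Pi.single j 1)) h3
    simpa [pd, ContinuousLinearMap.sum_apply] using h4
  -- linear maps whose coordinates are c
  set L : S → O → A → ((Fin n → ℝ) →L[ℝ] ℝ) :=
    fun s o a => ∑ i, c s o a i • (ContinuousLinearMap.proj i) with hLdef
  have hLapply : ∀ s o a η, L s o a η = ∑ i, η i * c s o a i := by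
    intro s o a η
    simp [hLdef, ContinuousLinearMap.sum_apply, mul_comm]
  have hLsingle : ∀ s o a j, L s o a (Pi.single j 1) = c s o a j := by
    intro s o a j
    rw [hLapply]
    simp [Pi.single_apply]
  -- derivative of ε
  have hεderiv : HasFDerivAt ε
      (∑ s, ∑ o, ∑ a,
        (μ (s, o) * π o s θ a * (2 * (f ηt s o a - aU s o a))) • L s o a) ηt := by
    have hεfun : ε = fun η => ∑ s, ∑ o, ∑ a,
        μ (s, o) * π o s θ a * (f η s o a - aU s o a) ^ 2 := funext hε
    rw [hεfun]
    apply HasFDerivAt.fun_sum; intro s _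
    apply HasFDerivAt.fun_sum; intro o _
    apply HasFDerivAt.fun_sum; intro a _
    have hfη : HasFDerivAt (fun η => f η s o a - aU s o a) (L s o a) ηt := by
      have he : (fun η => f η s o a) = fun η => L s o a η := by
        funext η; rw [hf, hLapply]
      have h0 : HasFDerivAt (fun η => f η s o a) (L s o a) ηt := by
        rw [he]; exact (L s o a).hasFDerivAt
      exact h0.sub_const _
    have hsq : HasFDerivAt (fun η => (f η s o a - aU s o a) ^ 2)
        ((2 * (f ηt s o a - aU s o a)) • L s o a) ηt := by
      have h2 := hfη.mul hfη
      simp_rw [pow_two]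
      rw [two_mul, add_smul]; exact h2
    have h3 := hsq.const_mul (μ (s, o) * π o s θ a)
    rw [← smul_smul]; exact h3
  -- criticality in coordinates
  have hcrit' : ∀ j, ∑ s, ∑ o, ∑ a,
      μ (s, o) * π o s θ a * (f ηt s o a - aU s o a) * c s o a j = 0 := by
    intro j
    have h0 := hεderiv.fderiv
    rw [hcrit] at h0
    have h4 := congrArg (fun (T : (Fin n → ℝ) →L[ℝ] ℝ) => T (Pi.single j 1)) h0
    simp only [ContinuousLinearMap.sum_apply, ContinuousLinearMap.smul_apply,
      ContinuousLinearMap.zero_apply, smul_eq_mul, hLsingle] at h4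
    have h5 : ∑ s, ∑ o, ∑ a,
        μ (s, o) * π o s θ a * (2 * (f ηt s o a - aU s o a)) * c s o a j
        = 2 * ∑ s, ∑ o, ∑ a,
          μ (s, o) * π o s θ a * (f ηt s o a - aU s o a) * c s o a j := by
      simp only [Finset.mul_sum]
      apply Finset.sum_congr rfl; intro s _
      apply Finset.sum_congr rfl; intro o _
      apply Finset.sum_congr rfl; intro a _
      ring
    rw [h5] at h4
    linarith
  -- main identity
  have hmain : G.mulVec ηt = g := by
    funext j
    have step1 : G.mulVec ηt j
        = ∑ s, ∑ o, ∑ a, μ (s, o) * π o s θ a * (f ηt s o a - aU s o a) * c s o a j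
          + ∑ s, ∑ o, ∑ a, μ (s, o) * π o s θ a * aU s o a * c s o a j := by
      show ∑ i, G j i * ηt i = _
      simp only [hG, hf, Finset.sum_mul]
      rw [Finset.sum_comm]
      rw [← Finset.sum_add_distrib]
      apply Finset.sum_congr rfl; intro s _
      rw [Finset.sum_comm, ← Finset.sum_add_distrib]
      apply Finset.sum_congr rfl; intro o _
      rw [Finset.sum_comm, ← Finset.sum_add_distrib]
      apply Finset.sum_congr rfl; intro a _
      have : ∑ i, μ (s, o) * π o s θ a * c s o a j * c s o a i * ηt i
          = μ (s, o) * π o s θ a * (∑ i, ηt i * c s o a i) * c s o a j := by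
        rw [Finset.mul_sum, Finset.sum_mul]
        apply Finset.sum_congr rfl; intro i _
        ring
      rw [this]
      ring
    rw [step1, hcrit' j, zero_add]
    -- now reduce ∑ μ π aU c to g j
    rw [hg]
    apply Finset.sum_congr rfl; intro s _
    apply Finset.sum_congr rfl; intro o _
    have : ∑ a, μ (s, o) * π o s θ a * aU s o a * c s o a j
        = μ (s, o) * ∑ a, pd j (fun θ' => π o s θ' a) θ * qU s o a
          - μ (s, o) * qO s o * ∑ a, pd j (fun θ' => π o s θ' a) θ := by
      rw [Finset.mul_sum, Finset.mul_sum, ← Finset.sum_sub_distrib]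
      apply Finset.sum_congr rfl; intro a _
      rw [haU, ← hB s o a j]
      ring
    rw [this, hC s o j, mul_zero, sub_zero]
  refine ⟨hmain, fun hu => ?_⟩
  have hdet : IsUnit G.det := (Matrix.isUnit_iff_isUnit_det G).mp hu
  have h6 := congrArg (fun x => G⁻¹.mulVec x) hmain
  simpa [Matrix.mulVec_mulVec, Matrix.nonsing_inv_mul G hdet] using h6
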